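/- For every k ≥ 2 and r ≥ 2, with n = r(k+r) − 1, the set D = A ∪ B, where A = {[1..r], [1..r−1]∪{r+1}, [r..2r−1]} and B = {[2r..3r−1], [3r..4r−1], ..., [(k+r−1)r..(k+r)r−1]}, is a k-tuple total dominating set of the Kneser graph K(n,r) of cardinality k+r+1. -/

import Mathlib

open Finset

/-- The vertex set of the Kneser graph `K(n,r)`: the `r`-element subsets of `[n] = {1,…,n}`. -/
def KneserVerts (n r : ℕ) : Finset (Finset ℕ) := (Finset.Icc 1 n).powersetCard r

/-- Adjacency in a Kneser graph: distinct disjoint sets. -/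
def KneserAdj (u v : Finset ℕ) : Prop := u ≠ v ∧ Disjoint u v

instance (u v : Finset ℕ) : Decidable (KneserAdj u v) := by
  unfold KneserAdj; infer_instance

/-- `D` is a `k`-dominating set of `K(n,r)`: every vertex outside `D` has at least
`k` neighbours in `D`. -/
def IsKDomSet (n r k : ℕ) (D : Finset (Finset ℕ)) : Prop :=
  D ⊆ KneserVerts n r ∧
    ∀ v ∈ KneserVerts n r, v ∉ D → k ≤ (D.filter fun u => KneserAdj v u).card

/-- `D` is a `k`-tuple dominating set of `K(n,r)`: every vertex has at least `k`
vertices of `D` in its closed neighbourhood. -/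
def IsKTupleDomSet (n r k : ℕ) (D : Finset (Finset ℕ)) : Prop :=
  D ⊆ KneserVerts n r ∧
    ∀ v ∈ KneserVerts n r, k ≤ (D.filter fun u => u = v ∨ KneserAdj v u).card

/-- `D` is a `k`-tuple total dominating set of `K(n,r)`: every vertex has at least
`k` neighbours in `D`. -/
def IsKTupleTotalDomSet (n r k : ℕ) (D : Finset (Finset ℕ)) : Prop :=
  D ⊆ KneserVerts n r ∧
    ∀ v ∈ KneserVerts n r, k ≤ (D.filter fun u => KneserAdj v u).card

/-- The `k`-domination number `γ_k(K(n,r))`. -/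
noncomputable def kdomNum (n r k : ℕ) : ℕ :=
  sInf {m | ∃ D, IsKDomSet n r k D ∧ D.card = m}

/-- The `k`-tuple domination number `γ_{×k}(K(n,r))`. -/
noncomputable def ktupleDomNum (n r k : ℕ) : ℕ :=
  sInf {m | ∃ D, IsKTupleDomSet n r k D ∧ D.card = m}

/-- The `k`-tuple total domination number `γ_{×k,t}(K(n,r))`. -/
noncomputable def ktupleTotalDomNum (n r k : ℕ) : ℕ :=
  sInf {m | ∃ D, IsKTupleTotalDomSet n r k D ∧ D.card = m}

/-- `S` is a 2-packing of `K(n,r)`: any two distinct members are neither adjacent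
nor have a common neighbour (i.e. are at distance at least 3). -/
def IsTwoPacking (n r : ℕ) (S : Finset (Finset ℕ)) : Prop :=
  S ⊆ KneserVerts n r ∧
    ∀ u ∈ S, ∀ v ∈ S, u ≠ v →
      ¬ KneserAdj u v ∧ ∀ w ∈ KneserVerts n r, ¬ (KneserAdj u w ∧ KneserAdj w v)

/-- The 2-packing number `ρ₂(K(n,r))`. -/
noncomputable def twoPackingNum (n r : ℕ) : ℕ :=
  sSup {m | ∃ S, IsTwoPacking n r S ∧ S.card = m}

/-- A clique in a Kneser graph: a family of pairwise disjoint sets. -/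
def IsKneserClique (D : Finset (Finset ℕ)) : Prop :=
  ∀ u ∈ D, ∀ v ∈ D, u ≠ v → Disjoint u v

lemma block_nat_eq {r i j x : ℕ} (hr : 1 ≤ r)
    (hx : x ∈ Finset.Icc (i * r) ((i + 1) * r - 1))
    (hx' : x ∈ Finset.Icc (j * r) ((j + 1) * r - 1)) : i = j := by
  simp only [Finset.mem_Icc] at hx hx'
  have hi : x < (i + 1) * r :=
    lt_of_le_of_lt hx.2 (Nat.sub_lt (Nat.mul_pos (Nat.succ_pos i) hr) one_pos)
  have hj : x < (j + 1) * r :=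
    lt_of_le_of_lt hx'.2 (Nat.sub_lt (Nat.mul_pos (Nat.succ_pos j) hr) one_pos)
  have h1 : i < j + 1 := lt_of_mul_lt_mul_right (lt_of_le_of_lt hx.1 hj) (Nat.zero_le r)
  have h2 : j < i + 1 := lt_of_mul_lt_mul_right (lt_of_le_of_lt hx'.1 hi) (Nat.zero_le r)
  omega

theorem stmt_7 (k r : ℕ) (hk : 2 ≤ k) (hr : 2 ≤ r) :
    IsKTupleTotalDomSet (r * (k + r) - 1) r k
      (({Finset.Icc 1 r, insert (r + 1) (Finset.Icc 1 (r - 1)),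
          Finset.Icc r (2 * r - 1)} : Finset (Finset ℕ)) ∪
        (Finset.Icc 2 (k + r - 1)).image fun i => Finset.Icc (i * r) ((i + 1) * r - 1)) ∧
    (({Finset.Icc 1 r, insert (r + 1) (Finset.Icc 1 (r - 1)),
          Finset.Icc r (2 * r - 1)} : Finset (Finset ℕ)) ∪
        (Finset.Icc 2 (k + r - 1)).image fun i =>
          Finset.Icc (i * r) ((i + 1) * r - 1)).card = k + r + 1 := by
  have hr1 : 1 ≤ r := by omega
  set n := r * (k + r) - 1 with hn
  set A1 := Finset.Icc 1 r with hA1def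
  set A2 := insert (r + 1) (Finset.Icc 1 (r - 1)) with hA2def
  set A3 := Finset.Icc r (2 * r - 1) with hA3def
  set Bf : ℕ → Finset ℕ := fun i => Finset.Icc (i * r) ((i + 1) * r - 1) with hBfdef
  set Aset : Finset (Finset ℕ) := {A1, A2, A3} with hAsetdef
  set Bset : Finset (Finset ℕ) := (Finset.Icc 2 (k + r - 1)).image Bf with hBsetdef
  have hmulkey : ∀ i : ℕ, (i + 1) * r = i * r + r := fun i => by ring
  have h4r : 4 * r ≤ r * (k + r) := by
    calc 4 * r = r * 4 := by ring
    _ ≤ r * (k + r) := Nat.mul_le_mul_left r (by omega)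
  have hmemBf : ∀ i x : ℕ, x ∈ Bf i ↔ i * r ≤ x ∧ x ≤ (i + 1) * r - 1 := by
    intro i x; simp [hBfdef, Finset.mem_Icc]
  have hmemA1 : ∀ x, x ∈ A1 ↔ 1 ≤ x ∧ x ≤ r := by
    intro x; simp [hA1def, Finset.mem_Icc]
  have hmemA2 : ∀ x, x ∈ A2 ↔ x = r + 1 ∨ (1 ≤ x ∧ x ≤ r - 1) := by
    intro x; simp [hA2def, Finset.mem_Icc]
  have hmemA3 : ∀ x, x ∈ A3 ↔ r ≤ x ∧ x ≤ 2 * r - 1 := by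
    intro x; simp [hA3def, Finset.mem_Icc]
  -- cardinalities of members
  have hA1card : A1.card = r := by rw [hA1def, Nat.card_Icc]; omega
  have hA2card : A2.card = r := by
    rw [hA2def, Finset.card_insert_of_notMem (by simp [Finset.mem_Icc]), Nat.card_Icc]
    omega
  have hA3card : A3.card = r := by rw [hA3def, Nat.card_Icc]; omega
  have hBicard : ∀ i : ℕ, (Bf i).card = r := by
    intro i
    simp only [hBfdef]
    rw [Nat.card_Icc]
    have := hmulkey i
    omega
  -- distinctness
  have hA12 : A1 ≠ A2 := by
    intro h
    have h1 : r ∈ A1 := (hmemA1 r).2 (by omega)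
    rw [h, hmemA2] at h1; omega
  have hA13 : A1 ≠ A3 := by
    intro h
    have h1 : (1 : ℕ) ∈ A1 := (hmemA1 1).2 (by omega)
    rw [h, hmemA3] at h1; omega
  have hA23 : A2 ≠ A3 := by
    intro h
    have h1 : (1 : ℕ) ∈ A2 := (hmemA2 1).2 (by omega)
    rw [h, hmemA3] at h1; omega
  have hAsetcard : Aset.card = 3 := by
    rw [hAsetdef, Finset.card_insert_of_notMem (by simp [hA12, hA13]),
      Finset.card_insert_of_notMem (by simp [hA23]), Finset.card_singleton]
  have hBinj : Set.InjOn Bf (Finset.Icc 2 (k + r - 1)) := by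
    intro i _ j _ hij
    have hxi : i * r ∈ Bf i := by
      rw [hmemBf]
      have := hmulkey i
      omega
    have hxj : i * r ∈ Bf j := hij ▸ hxi
    rw [hmemBf] at hxi hxj
    exact block_nat_eq hr1 (Finset.mem_Icc.2 hxi) (Finset.mem_Icc.2 hxj)
  have hBsetcard : Bset.card = k + r - 2 := by
    rw [hBsetdef, Finset.card_image_of_injOn hBinj, Nat.card_Icc]
    omega
  -- blocks start at ≥ 2r
  have hBlow : ∀ i : ℕ, 2 ≤ i → ∀ x ∈ Bf i, 2 * r ≤ x := by
    intro i hi x hx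
    rw [hmemBf] at hx
    have : 2 * r ≤ i * r := Nat.mul_le_mul_right r hi
    omega
  have hdisjAB : Disjoint Aset Bset := by
    rw [Finset.disjoint_left]
    intro u hu hub
    rw [hBsetdef, Finset.mem_image] at hub
    obtain ⟨i, hi, hiu⟩ := hub
    rw [Finset.mem_Icc] at hi
    rw [hAsetdef] at hu
    simp only [Finset.mem_insert, Finset.mem_singleton] at hu
    have hlow : ∀ x ∈ u, 2 * r ≤ x := hiu ▸ hBlow i hi.1
    rcases hu with h | h | h
    · have h1 : (1 : ℕ) ∈ u := h ▸ (hmemA1 1).2 (by omega)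
      have := hlow 1 h1; omega
    · have h1 : (1 : ℕ) ∈ u := h ▸ (hmemA2 1).2 (by omega)
      have := hlow 1 h1; omega
    · have h1 : r ∈ u := h ▸ (hmemA3 r).2 (by omega)
      have := hlow r h1; omega
  have hDcard : (Aset ∪ Bset).card = k + r + 1 := by
    rw [Finset.card_union_of_disjoint hdisjAB, hAsetcard, hBsetcard]
    omega
  -- D ⊆ KneserVerts n r
  have hsub : Aset ∪ Bset ⊆ KneserVerts n r := by
    intro u hu
    rw [KneserVerts, Finset.mem_powersetCard]
    rw [Finset.mem_union] at hu
    rcases hu with hu | hu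
    · rw [hAsetdef] at hu
      simp only [Finset.mem_insert, Finset.mem_singleton] at hu
      rcases hu with h | h | h <;> subst h
      · refine ⟨fun x hx => ?_, hA1card⟩
        rw [hmemA1] at hx
        rw [Finset.mem_Icc]; omega
      · refine ⟨fun x hx => ?_, hA2card⟩
        rw [hmemA2] at hx
        rw [Finset.mem_Icc]; omega
      · refine ⟨fun x hx => ?_, hA3card⟩
        rw [hmemA3] at hx
        rw [Finset.mem_Icc]; omega
    · rw [hBsetdef, Finset.mem_image] at hu
      obtain ⟨i, hi, rfl⟩ := hu
      rw [Finset.mem_Icc] at hi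
      refine ⟨fun x hx => ?_, hBicard i⟩
      rw [hmemBf] at hx
      rw [Finset.mem_Icc]
      have h1 : 2 * r ≤ i * r := Nat.mul_le_mul_right r hi.1
      have h2 : (i + 1) * r ≤ (k + r) * r := Nat.mul_le_mul_right r (by omega)
      have h3 : (k + r) * r = r * (k + r) := by ring
      omega
  refine ⟨⟨hsub, ?_⟩, hDcard⟩
  -- domination
  intro v hv
  rw [KneserVerts, Finset.mem_powersetCard] at hv
  obtain ⟨hvsub, hvcard⟩ := hv
  have hvne : v.Nonempty := Finset.card_pos.1 (by omega)
  -- adjacency to members of D is just disjointness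
  have hfilter_eq : ((Aset ∪ Bset).filter fun u => KneserAdj v u)
      = (Aset ∪ Bset).filter fun u => Disjoint v u := by
    apply Finset.filter_congr
    intro u hu
    constructor
    · exact fun h => h.2
    · intro h
      refine ⟨fun heq => ?_, h⟩
      subst heq
      exact hvne.ne_empty ((Finset.disjoint_self_iff_empty _).1 h)
  rw [hfilter_eq]
  have hsplit := Finset.card_filter_add_card_filter_not
    (s := Aset ∪ Bset) (p := fun u => Disjoint v u)
  rw [hDcard] at hsplit
  -- bound the number of non-disjoint members by r + 1
  have hbound : ((Aset ∪ Bset).filter fun u => ¬ Disjoint v u).card ≤ r + 1 := by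
    set va := v.filter (fun x => x < 2 * r) with hvadef
    set vb := v.filter (fun x => ¬ x < 2 * r) with hvbdef
    have hab : va.card + vb.card = r := by
      rw [hvadef, hvbdef, Finset.card_filter_add_card_filter_not, hvcard]
    rw [Finset.filter_union]
    refine le_trans (Finset.card_union_le _ _) ?_
    set HA := Aset.filter (fun u => ¬ Disjoint v u) with hHAdef
    set HB := Bset.filter (fun u => ¬ Disjoint v u) with hHBdef
    -- every member of HA contains an element of va
    have hAsub : ∀ u ∈ Aset, ∀ x ∈ u, x < 2 * r := by
      intro u hu x hx
      rw [hAsetdef] at hu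
      simp only [Finset.mem_insert, Finset.mem_singleton] at hu
      rcases hu with h | h | h <;> subst h
      · rw [hmemA1] at hx; omega
      · rw [hmemA2] at hx; omega
      · rw [hmemA3] at hx; omega
    have hHAwit : ∀ u ∈ HA, ∃ x ∈ va, x ∈ u := by
      intro u hu
      rw [hHAdef, Finset.mem_filter] at hu
      obtain ⟨x, hx⟩ := Finset.not_disjoint_iff.1 hu.2
      exact ⟨x, Finset.mem_filter.2 ⟨hx.1, hAsub u hu.1 x hx.2⟩, hx.2⟩
    -- HB bound via injection into vb
    have hHB : HB.card ≤ vb.card := by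
      apply Finset.card_le_card_of_injOn
        (fun u => if h : (v ∩ u).Nonempty then (v ∩ u).min' h else 0)
      · intro u hu
        rw [Finset.mem_coe, hHBdef, Finset.mem_filter, hBsetdef, Finset.mem_image] at hu
        obtain ⟨⟨i, hi, rfl⟩, hnd⟩ := hu
        rw [Finset.mem_Icc] at hi
        have hne : (v ∩ Bf i).Nonempty := by
          rw [Finset.nonempty_iff_ne_empty]
          intro h
          exact hnd (Finset.disjoint_iff_inter_eq_empty.2 h)
        simp only [hne, dif_pos]
        have hmem := (v ∩ Bf i).min'_mem hne
        rw [Finset.mem_inter] at hmem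
        rw [Finset.mem_coe, hvbdef, Finset.mem_filter]
        exact ⟨hmem.1, by have := hBlow i hi.1 _ hmem.2; omega⟩
      · intro u1 hu1 u2 hu2 heq
        rw [Finset.mem_coe, hHBdef, Finset.mem_filter] at hu1 hu2
        obtain ⟨hu1B, hnd1⟩ := hu1
        obtain ⟨hu2B, hnd2⟩ := hu2
        rw [hBsetdef, Finset.mem_image] at hu1B hu2B
        obtain ⟨i, hi, rfl⟩ := hu1B
        obtain ⟨j, hj, rfl⟩ := hu2B
        have hne1 : (v ∩ Bf i).Nonempty := by
          rw [Finset.nonempty_iff_ne_empty]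
          exact fun h => hnd1 (Finset.disjoint_iff_inter_eq_empty.2 h)
        have hne2 : (v ∩ Bf j).Nonempty := by
          rw [Finset.nonempty_iff_ne_empty]
          exact fun h => hnd2 (Finset.disjoint_iff_inter_eq_empty.2 h)
        simp only [hne1, hne2, dif_pos] at heq
        have hm1 := (v ∩ Bf i).min'_mem hne1
        have hm2 := (v ∩ Bf j).min'_mem hne2
        rw [Finset.mem_inter] at hm1 hm2
        rw [heq] at hm1
        have : i = j := block_nat_eq hr1 hm1.2 hm2.2
        rw [this]
    -- case analysis on va.card
    have hHAsubA : HA ⊆ Aset := Finset.filter_subset _ _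
    rcases Nat.lt_or_ge va.card 2 with hva | hva
    · rcases Nat.lt_or_ge va.card 1 with hva0 | hva1
      · -- va empty : HA empty
        have hvaemp : va = ∅ := Finset.card_eq_zero.1 (by omega)
        have : HA = ∅ := by
          rw [Finset.eq_empty_iff_forall_notMem]
          intro u hu
          obtain ⟨x, hx, _⟩ := hHAwit u hu
          rw [hvaemp] at hx
          exact absurd hx (Finset.notMem_empty x)
        rw [this]
        simp only [Finset.card_empty, zero_add]
        omega
      · -- va = {x0} : HA.card ≤ 2
        have hva1' : va.card = 1 := by omega
        obtain ⟨x0, hx0⟩ := Finset.card_eq_one.1 hva1'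
        have hHA2 : HA.card ≤ 2 := by
          by_contra hcon
          push_neg at hcon
          have hHA3 : Aset.card ≤ HA.card := by omega
          have hHAeq : HA = Aset := Finset.eq_of_subset_of_card_le hHAsubA hHA3
          have hx0mem : ∀ u ∈ Aset, x0 ∈ u := by
            intro u hu
            obtain ⟨x, hx, hxu⟩ := hHAwit u (hHAeq ▸ hu)
            rw [hx0, Finset.mem_singleton] at hx
            exact hx ▸ hxu
          have h1 : x0 ∈ A1 := hx0mem A1 (by rw [hAsetdef]; simp)
          have h2 : x0 ∈ A2 := hx0mem A2 (by rw [hAsetdef]; simp)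
          have h3 : x0 ∈ A3 := hx0mem A3 (by rw [hAsetdef]; simp)
          rw [hmemA1] at h1
          rw [hmemA2] at h2
          rw [hmemA3] at h3
          omega
        omega
    · -- va.card ≥ 2 : HA.card ≤ 3
      have hHA3 : HA.card ≤ 3 := hAsetcard ▸ Finset.card_le_card hHAsubA
      omega
  omega
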